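/- Let S be a finite set of size k and V ⊇ S of size n, and for u ∈ S, v ∈ V∖S let A^u, A^v ∈ {±1}^n. Suppose B ⊆ S is such that ⟨A^u, A^v⟩ ≥ k/2 for all u ∈ B, and suppose ‖Σ_{u∈B} A^u_{V∖S}‖₂ ≤ C√n·√|B| and |⟨Σ_{u∈B} A^u_S, A^v_S⟩| ≤ |B|·k/4. Then |B| ≤ 16C²·n²/k². -/
import Mathlib


/-- Abstracted spectral argument for the simple inner-product algorithm:
if every `u ∈ B` has `⟨A^u, A^v⟩ ≥ k/2`, the restricted column sums satisfy
`‖∑_{u∈B} A^u_{V∖S}‖₂ ≤ C√n√|B|`, and the boring part is at most `|B|k/4`,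
then `|B| ≤ 16C²n²/k²`. -/
theorem stmt_14 {V : Type*} [Fintype V] [DecidableEq V] (S : Finset V) (k n : ℕ)
    (hk : S.card = k) (hkpos : 0 < k) (hn : Fintype.card V = n)
    (A : V → V → ℝ) (v : V) (hv : v ∉ S) (C : ℝ) (hC : 0 ≤ C)
    (hval : ∀ u w, A u w = 1 ∨ A u w = -1)
    (B : Finset V) (hBS : B ⊆ S)
    (hinner : ∀ u ∈ B, (k : ℝ)/2 ≤ ∑ w, A u w * A v w)
    (hnorm : Real.sqrt (∑ w ∈ Finset.univ \ S, (∑ u ∈ B, A u w)^2) ≤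
      C * Real.sqrt n * Real.sqrt B.card)
    (hboring : |∑ w ∈ S, (∑ u ∈ B, A u w) * A v w| ≤ (B.card : ℝ) * k / 4) :
    (B.card : ℝ) ≤ 16 * C^2 * n^2 / k^2 := by
  set m : ℕ := B.card with hm
  have hkR : (0:ℝ) < k := by exact_mod_cast hkpos
  -- total sum lower bound
  have h1 : (m:ℝ) * ((k:ℝ)/2) ≤ ∑ u ∈ B, ∑ w, A u w * A v w := by
    calc (m:ℝ) * ((k:ℝ)/2) = ∑ _u ∈ B, (k:ℝ)/2 := by
          rw [Finset.sum_const, nsmul_eq_mul]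
      _ ≤ _ := Finset.sum_le_sum hinner
  -- swap sums and split
  have hswap : ∑ u ∈ B, ∑ w, A u w * A v w
      = ∑ w ∈ Finset.univ \ S, (∑ u ∈ B, A u w) * A v w
        + ∑ w ∈ S, (∑ u ∈ B, A u w) * A v w := by
    rw [Finset.sum_comm]
    rw [← Finset.sum_sdiff (Finset.subset_univ S)]
    congr 1 <;> exact Finset.sum_congr rfl (fun w _ => (Finset.sum_mul ..).symm)
  -- Cauchy–Schwarz on the outside part
  have hcs : ∑ w ∈ Finset.univ \ S, (∑ u ∈ B, A u w) * A v w
      ≤ C * (n:ℝ) * Real.sqrt m := by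
    have h2 : (∑ w ∈ Finset.univ \ S, (∑ u ∈ B, A u w) * A v w)
        ≤ Real.sqrt (∑ w ∈ Finset.univ \ S, (∑ u ∈ B, A u w)^2)
          * Real.sqrt (∑ w ∈ Finset.univ \ S, (A v w)^2) :=
      Real.sum_mul_le_sqrt_mul_sqrt _ _ _
    have h3 : ∑ w ∈ Finset.univ \ S, (A v w)^2 ≤ (n:ℝ) := by
      have : ∑ w ∈ Finset.univ \ S, (A v w)^2
          = ((Finset.univ \ S).card : ℝ) := by
        rw [Finset.sum_congr rfl (fun w _ => ?_), Finset.sum_const,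
          nsmul_eq_mul, mul_one]
        rcases hval v w with h | h <;> rw [h] <;> norm_num
      rw [this, ← hn]
      exact_mod_cast Finset.card_le_card (Finset.subset_univ _)
    have h4 : Real.sqrt (∑ w ∈ Finset.univ \ S, (A v w)^2) ≤ Real.sqrt n :=
      Real.sqrt_le_sqrt h3
    calc ∑ w ∈ Finset.univ \ S, (∑ u ∈ B, A u w) * A v w
        ≤ Real.sqrt (∑ w ∈ Finset.univ \ S, (∑ u ∈ B, A u w)^2)
          * Real.sqrt (∑ w ∈ Finset.univ \ S, (A v w)^2) := h2
      _ ≤ (C * Real.sqrt n * Real.sqrt m) * Real.sqrt n := by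
          apply mul_le_mul hnorm h4 (Real.sqrt_nonneg _)
          positivity
      _ = C * (n:ℝ) * Real.sqrt m := by
          rw [show (C * Real.sqrt n * Real.sqrt m) * Real.sqrt n
            = C * (Real.sqrt n * Real.sqrt n) * Real.sqrt m by ring,
            Real.mul_self_sqrt (by positivity)]
  -- combine
  have hkey : (m:ℝ) * k ≤ 4 * C * n * Real.sqrt m := by
    have hb := (abs_le.mp hboring).2
    nlinarith [h1, hswap, hcs]
  rcases Nat.eq_zero_or_pos m with h0 | hpos
  · rw [h0]; push_cast; positivity
  · have hms : (0:ℝ) < Real.sqrt m := Real.sqrt_pos.mpr (by exact_mod_cast hpos)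
    have hmsq : Real.sqrt m * Real.sqrt m = (m:ℝ) :=
      Real.mul_self_sqrt (by positivity)
    have h5 : Real.sqrt m * k ≤ 4 * C * n := by
      have := hkey
      rw [← hmsq] at this
      nlinarith
    rw [le_div_iff₀ (by positivity)]
    nlinarith [hmsq, hms.le, h5, mul_nonneg (mul_nonneg (by norm_num : (0:ℝ) ≤ 4) hC) (Nat.cast_nonneg n)]
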